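/- Let K be a field, n ≥ 1 an integer, and A an n×n matrix over K. Then for every integer p ≥ 0, the matrix identity Σ_{i=0}^{n} (−1)^i · tr(⋀^i A) · A^{n−i+p} = 0 holds, where tr(⋀^i A) · A^{n−i+p} denotes the scalar multiple of the matrix power A^{n−i+p}. -/

import Mathlib

/-- The endomorphism induced by the matrix `A` on the `i`-th exterior power of `K^n`. -/
noncomputable def extPowMap {K : Type*} [Field K] {n : ℕ} (A : Matrix (Fin n) (Fin n) K) (i : ℕ) :
    ⋀[K]^i (Fin n → K) →ₗ[K] ⋀[K]^i (Fin n → K) :=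
  LinearMap.restrict (ExteriorAlgebra.map A.mulVecLin).toLinearMap
    (fun x hx => by
      have h : Submodule.map (ExteriorAlgebra.map A.mulVecLin).toLinearMap
          ((LinearMap.range
            (ExteriorAlgebra.ι K : (Fin n → K) →ₗ[K] ExteriorAlgebra K (Fin n → K))) ^ i)
          ≤ (LinearMap.range
            (ExteriorAlgebra.ι K : (Fin n → K) →ₗ[K] ExteriorAlgebra K (Fin n → K))) ^ i := by
        rw [Submodule.map_pow]
        refine pow_le_pow_left' ?_ i
        rw [← LinearMap.range_comp, ExteriorAlgebra.map_comp_ι, LinearMap.range_comp]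
        exact LinearMap.map_le_range
      exact h ⟨x, hx, rfl⟩)

/-- `trExtPow A i = tr(⋀^i A)`, the trace of the `i`-th exterior power of `A`. -/
noncomputable def trExtPow {K : Type*} [Field K] {n : ℕ} (A : Matrix (Fin n) (Fin n) K)
    (i : ℕ) : K :=
  LinearMap.trace K _ (extPowMap A i)


open ExteriorAlgebra Polynomial

namespace CHPaux

variable {K : Type*} [Field K] {n : ℕ}

/-- index type for the basis of the i-th exterior power -/
abbrev Idx (n i : ℕ) := {s : Finset (Fin n) // s.card = i}

noncomputable def emb {i : ℕ} (s : Idx n i) : Fin i → Fin n := s.1.orderEmbOfFin s.2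

lemma emb_inj {i : ℕ} (s : Idx n i) : Function.Injective (emb s) :=
  (s.1.orderEmbOfFin s.2).injective

lemma emb_mem {i : ℕ} (s : Idx n i) (j : Fin i) : emb s j ∈ s.1 :=
  s.1.orderEmbOfFin_mem s.2 j

noncomputable def wv (K : Type*) [Field K] {n i : ℕ} (s : Idx n i) : Fin i → (Fin n → K) :=
  fun j => Pi.single (emb s j) 1

noncomputable def w (K : Type*) [Field K] {n : ℕ} (i : ℕ) (s : Idx n i) :
    ExteriorAlgebra K (Fin n → K) := ιMulti K i (wv K s)

lemma w_mem {i : ℕ} (s : Idx n i) : w K i s ∈ ⋀[K]^i (Fin n → K) :=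
  ιMulti_range K i (Set.mem_range_self _)

/-- dual alternating map -/
noncomputable def φ (K : Type*) [Field K] {n : ℕ} (i : ℕ) (s : Idx n i) :
    (Fin n → K) [⋀^Fin i]→ₗ[K] K :=
  (Matrix.detRowAlternating).compLinearMap (LinearMap.funLeft K K (emb s))

lemma φ_apply {i : ℕ} (s : Idx n i) (v : Fin i → (Fin n → K)) :
    φ K i s v = Matrix.det (Matrix.of fun j k => v j (emb s k)) := rfl

/-- dual functional on the exterior algebra -/
noncomputable def F (K : Type*) [Field K] {n : ℕ} (i : ℕ) (s : Idx n i) :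
    ExteriorAlgebra K (Fin n → K) →ₗ[K] K :=
  liftAlternating (Function.update (fun _ => 0) i (φ K i s))

lemma F_ιMulti {i : ℕ} (s : Idx n i) (v : Fin i → (Fin n → K)) :
    F K i s (ιMulti K i v) = φ K i s v := by
  rw [F, liftAlternating_apply_ιMulti, Function.update_self]

lemma F_w {i : ℕ} (s t : Idx n i) :
    F K i s (w K i t) = if s = t then 1 else 0 := by
  rw [w, F_ιMulti, φ_apply]
  split_ifs with h
  · subst h
    have : (Matrix.of fun j k => wv K s j (emb s k)) = (1 : Matrix (Fin i) (Fin i) K) := by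
      ext j k
      simp only [Matrix.of_apply, wv, Matrix.one_apply]
      rcases eq_or_ne j k with rfl | hjk
      · simp
      · rw [Pi.single_apply, if_neg (fun hh => hjk (emb_inj s hh).symm), if_neg hjk]
    rw [this, Matrix.det_one]
  · -- some element of t not in s
    have hne : t.1 ≠ s.1 := fun hh => h (Subtype.ext hh.symm)
    have hcard : s.1.card = t.1.card := by rw [s.2, t.2]
    obtain ⟨x, hxt, hxs⟩ : ∃ x ∈ t.1, x ∉ s.1 := by
      by_contra hc
      push_neg at hc
      exact hne (Finset.eq_of_subset_of_card_le hc (le_of_eq hcard))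
    obtain ⟨j0, rfl⟩ : ∃ j0, emb t j0 = x := by
      have h2 : x ∈ Set.range (emb t) := by
        rw [emb, Finset.range_orderEmbOfFin t.1 t.2]; exact hxt
      exact h2
    apply Matrix.det_eq_zero_of_row_eq_zero j0
    intro k
    simp only [Matrix.of_apply, wv]
    rw [Pi.single_apply, if_neg]
    intro hh
    exact hxs (hh ▸ emb_mem s k)

lemma indep (i : ℕ) : LinearIndependent K (w K (n := n) i) := by
  rw [Fintype.linearIndependent_iff]
  intro g hg s
  have := congrArg (F K i s) hg
  rw [map_sum, map_zero] at this
  simpa [map_smul, F_w, Finset.sum_ite_eq] using this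

end CHPaux

namespace CHPaux
variable {K : Type*} [Field K] {n : ℕ}

lemma ιMulti_mem_span (i : ℕ) (v : Fin i → (Fin n → K)) :
    ιMulti K i v ∈ Submodule.span K (Set.range (w K (n := n) i)) := by
  classical
  have hv : ∀ j, v j = ∑ k : Fin n, v j k • (Pi.single k 1 : Fin n → K) := by
    intro j
    ext x
    simp [Pi.single_apply, Finset.sum_ite_eq', mul_comm]
  have h1 : ιMulti K i v =
      ∑ r : Fin i → Fin n, (∏ j, v j (r j)) • ιMulti K i (fun j => Pi.single (r j) 1) := by
    calc ιMulti K i v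
        = (ιMulti K i).toMultilinearMap (fun j => ∑ k : Fin n, v j k • (Pi.single k 1 : Fin n → K)) := by
          rw [← funext hv]; rfl
      _ = ∑ r : Fin i → Fin n, (ιMulti K i).toMultilinearMap
            (fun j => v j (r j) • (Pi.single (r j) 1 : Fin n → K)) := by
          rw [MultilinearMap.map_sum]
      _ = ∑ r : Fin i → Fin n, (∏ j, v j (r j)) • ιMulti K i (fun j => Pi.single (r j) 1) := by
          refine Finset.sum_congr rfl fun r _ => ?_
          rw [MultilinearMap.map_smul_univ]
          rfl
  rw [h1]
  refine Submodule.sum_mem _ fun r _ => Submodule.smul_mem _ _ ?_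
  by_cases hr : Function.Injective r
  · -- image finset
    set s : Idx n i := ⟨Finset.image r Finset.univ, by
      rw [Finset.card_image_of_injective _ hr, Finset.card_univ, Fintype.card_fin]⟩ with hs
    have hrange : Set.range r = Set.range (emb s) := by
      rw [emb, Finset.range_orderEmbOfFin]
      simp [hs, Finset.coe_image]
    let σ : Equiv.Perm (Fin i) :=
      (Equiv.ofInjective r hr).trans
        ((Equiv.setCongr hrange).trans (Equiv.ofInjective (emb s) (emb_inj s)).symm)
    have hcomp : (fun j => (Pi.single (r j) 1 : Fin n → K)) = (wv K s) ∘ σ := by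
      funext j
      have : emb s (σ j) = r j := by
        simp only [σ, Equiv.trans_apply, Equiv.setCongr_apply]
        exact congrArg Subtype.val
          ((Equiv.ofInjective (emb s) (emb_inj s)).apply_symm_apply ⟨r j, _⟩)
      rw [Function.comp_apply, wv, this]
    rw [hcomp, AlternatingMap.map_perm]
    exact Submodule.smul_mem _ _ (Submodule.subset_span (Set.mem_range_self s))
  · -- repeated index: ιMulti vanishes
    rw [Function.not_injective_iff] at hr
    obtain ⟨j, j', hjj, hne⟩ := hr
    have : ιMulti K i (fun j => (Pi.single (r j) 1 : Fin n → K)) = 0 :=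
      AlternatingMap.map_eq_zero_of_eq _ _ (by rw [hjj]) hne
    rw [this]
    exact Submodule.zero_mem _

lemma span_w (i : ℕ) :
    Submodule.span K (Set.range (w K (n := n) i)) = ⋀[K]^i (Fin n → K) := by
  apply le_antisymm
  · rw [Submodule.span_le]
    rintro _ ⟨s, rfl⟩
    exact w_mem s
  · rw [← ιMulti_span_fixedDegree K i, Submodule.span_le]
    rintro _ ⟨v, rfl⟩
    exact ιMulti_mem_span i v

/-- basis of the i-th exterior power of K^n -/
noncomputable def extBasis (K : Type*) [Field K] (n i : ℕ) :
    Module.Basis (Idx n i) K (⋀[K]^i (Fin n → K)) :=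
  (Module.Basis.span (indep (K := K) (n := n) i)).map (LinearEquiv.ofEq _ _ (span_w i))

lemma extBasis_coe (i : ℕ) (s : Idx n i) : (extBasis K n i s : ExteriorAlgebra K (Fin n → K)) = w K i s := by
  rw [extBasis]
  simp only [Module.Basis.map_apply]
  rw [LinearEquiv.coe_ofEq_apply]
  exact congrArg Subtype.val (Module.Basis.span_apply (indep (K := K) (n := n) i) s)

end CHPaux

namespace CHPaux
variable {K : Type*} [Field K] {n : ℕ}

lemma coord_eq_F (i : ℕ) (s : Idx n i) (x : ⋀[K]^i (Fin n → K)) :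
    (extBasis K n i).repr x s = F K i s (x : ExteriorAlgebra K (Fin n → K)) := by
  have hG : (extBasis K n i).coord s =
      (F K i s).comp (Submodule.subtype _) := by
    apply Module.Basis.ext (extBasis K n i)
    intro t
    rw [Module.Basis.coord_apply, Module.Basis.repr_self]
    simp only [LinearMap.comp_apply, Submodule.subtype_apply, extBasis_coe, F_w]
    rw [Finsupp.single_apply]
    simp [eq_comm]
  have := congrFun (congrArg (fun f => f.toFun) hG) x
  simpa [Module.Basis.coord_apply] using this

theorem trExtPow_eq_sum_minors (A : Matrix (Fin n) (Fin n) K) (i : ℕ) :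
    trExtPow A i = ∑ s : Idx n i, (A.submatrix (emb s) (emb s)).det := by
  classical
  rw [trExtPow, LinearMap.trace_eq_matrix_trace K (extBasis K n i), Matrix.trace]
  refine Finset.sum_congr rfl fun s _ => ?_
  rw [Matrix.diag_apply, LinearMap.toMatrix_apply, coord_eq_F]
  have h1 : ((extPowMap A i) (extBasis K n i s) : ExteriorAlgebra K (Fin n → K)) =
      ExteriorAlgebra.map A.mulVecLin (w K i s) := by
    rw [extPowMap, LinearMap.restrict_coe_apply, extBasis_coe]
    rfl
  rw [h1, w, ExteriorAlgebra.map_apply_ιMulti, F_ιMulti, φ_apply]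
  have h2 : (Matrix.of fun j k => (A.mulVecLin ∘ wv K s) j (emb s k)) =
      Matrix.transpose (A.submatrix (emb s) (emb s)) := by
    ext j k
    simp only [Matrix.of_apply, Function.comp_apply, wv, Matrix.mulVecLin_apply,
      Matrix.mulVec_single, Matrix.transpose_apply, Matrix.submatrix_apply]
    simp [Matrix.col_apply]
  rw [h2, Matrix.det_transpose]

end CHPaux

namespace CHPaux
variable {K : Type*} [Field K] {n : ℕ}

lemma det_piecewise (A : Matrix (Fin n) (Fin n) K) (s : Finset (Fin n)) :
    Matrix.detRowAlternating
      (s.piecewise (fun j => -((A.map C) j)) (fun j => Pi.single j (1 : K[X])))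
      = (-1 : K[X]) ^ s.card *
        C (Matrix.det (A.submatrix (fun x : ↥s => (x : Fin n)) (fun x : ↥s => (x : Fin n)))) := by
  classical
  set M : Matrix (Fin n) (Fin n) K[X] :=
    Matrix.of (s.piecewise (fun j => -((A.map C) j)) (fun j => Pi.single j (1 : K[X]))) with hM
  have h0 : Matrix.detRowAlternating
      (s.piecewise (fun j => -((A.map C) j)) (fun j => Pi.single j (1 : K[X]))) = M.det := rfl
  rw [h0]
  let e : ↥s ⊕ {x : Fin n // x ∉ s} ≃ Fin n := Equiv.sumCompl (· ∈ s)
  rw [← Matrix.det_submatrix_equiv_self e M]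
  have hblock : M.submatrix e e =
      Matrix.fromBlocks
        (-(((A.map C)).submatrix (fun x : ↥s => (x : Fin n)) (fun x : ↥s => (x : Fin n))))
        (-(((A.map C)).submatrix (fun x : ↥s => (x : Fin n)) (fun x : {x : Fin n // x ∉ s} => (x : Fin n))))
        0 1 := by
    ext (x | x) (y | y) <;>
      simp only [Matrix.submatrix_apply, Matrix.fromBlocks_apply₁₁, Matrix.fromBlocks_apply₁₂,
        Matrix.fromBlocks_apply₂₁, Matrix.fromBlocks_apply₂₂, hM, Matrix.of_apply,
        Equiv.sumCompl_apply_inl, Equiv.sumCompl_apply_inr, e] <;>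
      [skip; skip; skip; skip]
    · rw [Finset.piecewise_eq_of_mem _ _ _ x.2]; rfl
    · rw [Finset.piecewise_eq_of_mem _ _ _ x.2]; rfl
    · rw [Finset.piecewise_eq_of_notMem _ _ _ x.2, Pi.single_apply, Matrix.zero_apply,
        if_neg (fun h : (y : Fin n) = (x : Fin n) => x.2 (h ▸ y.2))]
    · rw [Finset.piecewise_eq_of_notMem _ _ _ x.2, Pi.single_apply, Matrix.one_apply]
      simp [Subtype.val_injective.eq_iff, eq_comm]
  rw [hblock, Matrix.det_fromBlocks_zero₂₁, Matrix.det_one, mul_one, Matrix.det_neg,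
    Fintype.card_coe]
  congr 1
  rw [RingHom.map_det]
  congr 1

end CHPaux

namespace CHPaux
variable {K : Type*} [Field K] {n : ℕ}

lemma detRA (m : Fin n → Fin n → K[X]) :
    Matrix.detRowAlternating m
      = (Matrix.detRowAlternating (R := K[X]) (n := Fin n)).toMultilinearMap m := rfl

lemma minor_val_eq (A : Matrix (Fin n) (Fin n) K) {i : ℕ} (s : Finset (Fin n)) (h : s.card = i) :
    Matrix.det (A.submatrix (fun x : ↥s => (x : Fin n)) (fun x : ↥s => (x : Fin n)))
      = (A.submatrix (emb ⟨s, h⟩) (emb ⟨s, h⟩)).det := by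
  classical
  let e : Fin i ≃ ↥s := (s.orderIsoOfFin h).toEquiv
  rw [← Matrix.det_submatrix_equiv_self e]
  congr 1

theorem charpoly_eq (A : Matrix (Fin n) (Fin n) K) :
    A.charpoly = ∑ i ∈ Finset.range (n + 1),
      C ((-1 : K) ^ i * ∑ s : Idx n i, (A.submatrix (emb s) (emb s)).det) * X ^ (n - i) := by
  classical
  set v : Fin n → Fin n → K[X] := fun j => -((A.map C) j) with hv
  set u : Fin n → Fin n → K[X] := fun j => Pi.single j X with hu
  have hchar : A.charmatrix = Matrix.of (v + u) := by
    ext j k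
    rw [Matrix.charmatrix_apply, Matrix.of_apply, Pi.add_apply, Pi.add_apply, hv, hu]
    simp only [Matrix.diagonal_apply, Matrix.map_apply, Pi.neg_apply, Pi.single_apply]
    rcases eq_or_ne j k with rfl | hjk
    · simp [sub_eq_neg_add]
    · rw [if_neg hjk, if_neg (Ne.symm hjk)]
      simp
  have h1 : A.charpoly = Matrix.detRowAlternating (v + u) := by
    rw [Matrix.charpoly, hchar]; rfl
  rw [h1, detRA, (Matrix.detRowAlternating (R := K[X]) (n := Fin n)).toMultilinearMap.map_add_univ v u]
  have h2 : ∀ sf : Finset (Fin n),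
      Matrix.detRowAlternating (sf.piecewise v u)
        = (X : K[X]) ^ (n - sf.card) • ((-1 : K[X]) ^ sf.card *
            C (Matrix.det (A.submatrix (fun x : ↥sf => (x : Fin n)) (fun x : ↥sf => (x : Fin n))))) := by
    intro sf
    have hpw : sf.piecewise v u = fun j => (if j ∈ sf then (1 : K[X]) else X) •
        (sf.piecewise (fun j => -((A.map C) j)) (fun j => Pi.single j (1 : K[X]))) j := by
      funext j
      by_cases hj : j ∈ sf
      · rw [Finset.piecewise_eq_of_mem _ _ _ hj, Finset.piecewise_eq_of_mem _ _ _ hj,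
          if_pos hj, one_smul]
      · rw [Finset.piecewise_eq_of_notMem _ _ _ hj, Finset.piecewise_eq_of_notMem _ _ _ hj,
          if_neg hj, hu]
        show (Pi.single j X : Fin n → K[X]) = X • (Pi.single j 1 : Fin n → K[X])
        rw [← Pi.single_smul, smul_eq_mul, mul_one]
    rw [hpw, detRA]
    rw [(Matrix.detRowAlternating (R := K[X]) (n := Fin n)).toMultilinearMap.map_smul_univ]
    have hprod : (∏ j : Fin n, if j ∈ sf then (1 : K[X]) else X) = X ^ (n - sf.card) := by
      rw [Finset.prod_ite, Finset.prod_const_one, Finset.prod_const, one_mul]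
      congr 1
      have : Finset.univ.filter (fun j => j ∉ sf) = sfᶜ := by
        ext j; simp
      rw [this, Finset.card_compl, Fintype.card_fin]
    rw [hprod]
    congr 1
    exact det_piecewise A sf
  rw [Finset.sum_congr rfl fun sf _ => (detRA (sf.piecewise v u)).symm.trans (h2 sf)]
  rw [← Finset.powerset_univ, Finset.sum_powerset, Finset.card_univ, Fintype.card_fin]
  refine Finset.sum_congr rfl fun i hi => ?_
  refine (Finset.sum_subtype (F := inferInstance) (Finset.powersetCard i Finset.univ)
    (fun t => Finset.mem_powersetCard_univ) _).trans ?_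
  have h3 : ∀ s : Idx n i,
      (X : K[X]) ^ (n - (s : Finset (Fin n)).card) • ((-1 : K[X]) ^ (s : Finset (Fin n)).card *
        C (Matrix.det (A.submatrix (fun x : ↥(s : Finset (Fin n)) => (x : Fin n))
          (fun x : ↥(s : Finset (Fin n)) => (x : Fin n)))))
      = (X : K[X]) ^ (n - i) • ((-1 : K[X]) ^ i * C ((A.submatrix (emb s) (emb s)).det)) := by
    intro s
    rw [minor_val_eq A s.1 s.2, s.2]
  rw [Finset.sum_congr rfl fun s _ => h3 s, ← Finset.smul_sum, ← Finset.mul_sum, ← map_sum]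
  rw [smul_eq_mul, map_mul, map_pow, map_neg, map_one, mul_comm]

end CHPaux

theorem cayley_hamilton_pow
    (K : Type*) [Field K] (n : ℕ) (hn : 1 ≤ n) (A : Matrix (Fin n) (Fin n) K) :
    ∀ p : ℕ,
      ∑ i ∈ Finset.range (n + 1), ((-1 : K) ^ i * trExtPow A i) • A ^ (n - i + p) = 0 := by
  intro p
  have hch := Matrix.aeval_self_charpoly A
  rw [CHPaux.charpoly_eq A, map_sum] at hch
  have h1 : ∀ i ∈ Finset.range (n + 1),
      aeval A (C ((-1 : K) ^ i * ∑ s : CHPaux.Idx n i,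
        (A.submatrix (CHPaux.emb s) (CHPaux.emb s)).det) * X ^ (n - i))
      = ((-1 : K) ^ i * trExtPow A i) • A ^ (n - i) := by
    intro i _
    rw [map_mul, aeval_C, map_pow, aeval_X, CHPaux.trExtPow_eq_sum_minors A i,
      ← Algebra.smul_def]
  rw [Finset.sum_congr rfl h1] at hch
  have h2 := congrArg (fun M => M * A ^ p) hch
  simpa only [Finset.sum_mul, smul_mul_assoc, ← pow_add, zero_mul] using h2
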